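/- arXiv:cond-mat/0305462 — 2 statements merged into one kernel-verified Lean document; each statement's English description precedes it below -/
import Mathlib

section
/- For β > 1 the mean field equation m = tanh(β·m) has a unique solution m* in the open interval (0, 1). -/
open Real Set

lemma tanh_eq_div (x : ℝ) : Real.tanh x = Real.sinh x / Real.cosh x :=
  Real.tanh_eq_sinh_div_cosh x

lemma continuous_tanh' : Continuous Real.tanh := by
  have : Real.tanh = fun x => Real.sinh x / Real.cosh x := funext tanh_eq_div
  rw [this]
  exact Real.continuous_sinh.div Real.continuous_cosh fun x => (Real.cosh_pos x).ne'

lemma tanh_lt_one' (x : ℝ) : Real.tanh x < 1 := by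
  rw [tanh_eq_div, div_lt_one (Real.cosh_pos x)]
  have := Real.cosh_sub_sinh x
  have := Real.exp_pos (-x)
  linarith

lemma div_lt_tanh (x : ℝ) (hx : 0 < x) : x / (1 + x) < Real.tanh x := by
  rw [tanh_eq_div, div_lt_div_iff₀ (by linarith) (Real.cosh_pos x)]
  have h1 : x < Real.sinh x := Real.self_lt_sinh_iff.2 hx
  have h2 : Real.cosh x - Real.sinh x = Real.exp (-x) := Real.cosh_sub_sinh x
  have h3 : Real.exp (-x) < 1 := Real.exp_lt_one_iff.2 (by linarith)
  nlinarith [Real.cosh_pos x]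

lemma hasDerivAt_tanh' (x : ℝ) :
    HasDerivAt Real.tanh (1 / Real.cosh x ^ 2) x := by
  have h : Real.tanh = fun y => Real.sinh y / Real.cosh y := funext tanh_eq_div
  rw [h]
  have := (Real.hasDerivAt_sinh x).div (Real.hasDerivAt_cosh x) (Real.cosh_pos x).ne'
  refine this.congr_deriv ?_
  have := Real.cosh_sq_sub_sinh_sq x
  congr 1
  nlinarith

lemma deriv_tanh' : deriv Real.tanh = fun x => 1 / Real.cosh x ^ 2 :=
  funext fun x => (hasDerivAt_tanh' x).deriv

lemma tanh_strictConcaveOn : StrictConcaveOn ℝ (Set.Ici (0:ℝ)) Real.tanh := by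
  refine StrictAntiOn.strictConcaveOn_of_deriv (convex_Ici 0)
    continuous_tanh'.continuousOn ?_
  rw [interior_Ici, deriv_tanh']
  intro x hx y hy hxy
  have hcx : (0:ℝ) < Real.cosh x := Real.cosh_pos x
  have hcy : (0:ℝ) < Real.cosh y := Real.cosh_pos y
  have : Real.cosh x < Real.cosh y := by
    rw [Real.cosh_lt_cosh]
    rw [mem_Ioi] at hx hy
    rw [abs_of_pos hx, abs_of_pos hy]; exact hxy
  apply div_lt_div_of_pos_left one_pos (by positivity)
  nlinarith

lemma tanh_chord {x y : ℝ} (hx : 0 < x) (hxy : x < y) :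
    x / y * Real.tanh y < Real.tanh x := by
  have hy : 0 < y := hx.trans hxy
  have ha : 0 < 1 - x / y := by
    rw [sub_pos, div_lt_one hy]; exact hxy
  have hb : 0 < x / y := div_pos hx hy
  have hab : (1 - x / y) + x / y = 1 := by ring
  have h := tanh_strictConcaveOn.2 (self_mem_Ici) (mem_Ici.2 hy.le)
    hy.ne ha hb hab
  simp only [smul_eq_mul, mul_zero, Real.tanh_zero, zero_add] at h
  rwa [div_mul_cancel₀ _ hy.ne'] at h

theorem meanField_unique_positive_solution (β : ℝ) (hβ : 1 < β) :
    ∃! m : ℝ, m ∈ Set.Ioo (0 : ℝ) 1 ∧ m = Real.tanh (β * m) := by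
  have hβ0 : (0:ℝ) < β := by linarith
  -- key ratio lemma for uniqueness
  have ratio : ∀ x y : ℝ, 0 < x → x < y → x * Real.tanh y < y * Real.tanh x := by
    intro x y hx hxy
    have hy : 0 < y := hx.trans hxy
    have := tanh_chord hx hxy
    rw [div_mul_eq_mul_div, div_lt_iff₀ hy] at this
    linarith
  -- existence via IVT
  set m₀ : ℝ := (β - 1) / β with hm₀
  have hm₀pos : 0 < m₀ := div_pos (by linarith) hβ0
  have hm₀lt : m₀ < 1 := by rw [hm₀, div_lt_one hβ0]; linarith
  set f : ℝ → ℝ := fun m => Real.tanh (β * m) - m with hf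
  have hfc : Continuous f := (continuous_tanh'.comp (continuous_const.mul continuous_id)).sub continuous_id
  have hf1 : f 1 < 0 := by
    simp only [hf, mul_one]
    linarith [tanh_lt_one' β]
  have hfm₀ : 0 < f m₀ := by
    have hbm : β * m₀ = β - 1 := by rw [hm₀]; field_simp
    have h1 : (β - 1) / (1 + (β - 1)) < Real.tanh (β - 1) := div_lt_tanh _ (by linarith)
    have h2 : (β - 1) / (1 + (β - 1)) = m₀ := by rw [hm₀]; ring_nf
    have : f m₀ = Real.tanh (β - 1) - m₀ := by rw [hf]; simp [hbm]
    rw [this]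
    linarith [h2 ▸ h1]
  obtain ⟨m, hmIoo, hm0⟩ : ∃ m ∈ Ioo m₀ 1, f m = 0 := by
    have := intermediate_value_Ioo' (le_of_lt hm₀lt) hfc.continuousOn (a := m₀) (b := 1)
    have h0 : (0:ℝ) ∈ Ioo (f 1) (f m₀) := ⟨hf1, hfm₀⟩
    obtain ⟨m, hm, hfm⟩ := this h0
    exact ⟨m, hm, hfm⟩
  have hmmem : m ∈ Set.Ioo (0:ℝ) 1 := ⟨hm₀pos.trans hmIoo.1, hmIoo.2⟩
  have hmeq : m = Real.tanh (β * m) := by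
    have : Real.tanh (β * m) - m = 0 := hm0
    linarith
  refine ⟨m, ⟨hmmem, hmeq⟩, ?_⟩
  -- uniqueness
  have uniq : ∀ a b : ℝ, a ∈ Set.Ioo (0:ℝ) 1 → a = Real.tanh (β * a) →
      b ∈ Set.Ioo (0:ℝ) 1 → b = Real.tanh (β * b) → a < b → False := by
    intro a b ha hae hb hbe hab
    have h := ratio (β * a) (β * b) (mul_pos hβ0 ha.1)
      (by exact mul_lt_mul_of_pos_left hab hβ0)
    rw [← hae, ← hbe] at h
    nlinarith
  intro y ⟨hy, hye⟩
  rcases lt_trichotomy y m with h | h | h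
  · exact absurd (uniq y m hy hye hmmem hmeq h) id
  · exact h
  · exact absurd (uniq m y hmmem hmeq hy hye h) id
end

section
/- For 0 < β ≤ 1, the mean field free energy g_β(m) = -m²/2 - (1/β)·I(m) is convex on (-1,1). -/
noncomputable def binEntropy (m : ℝ) : ℝ :=
  -((1 - m) / 2) * Real.log ((1 - m) / 2) - ((1 + m) / 2) * Real.log ((1 + m) / 2)

noncomputable def meanFieldFreeEnergy (β m : ℝ) : ℝ := -m ^ 2 / 2 - binEntropy m / β

lemma hasDerivAt_binEntropy {m : ℝ} (h1 : -1 < m) (h2 : m < 1) :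
    HasDerivAt binEntropy ((Real.log ((1 - m) / 2) - Real.log ((1 + m) / 2)) / 2) m := by
  have hu : (0:ℝ) < (1 - m) / 2 := by linarith
  have hv : (0:ℝ) < (1 + m) / 2 := by linarith
  have hu' : HasDerivAt (fun x : ℝ => (1 - x) / 2) (-(1/2)) m := by
    have := (((hasDerivAt_id m).const_sub 1).div_const 2)
    convert this using 1 <;> norm_num
    all_goals rfl
  have hv' : HasDerivAt (fun x : ℝ => (1 + x) / 2) (1/2) m := by
    have := (((hasDerivAt_id m).const_add 1).div_const 2)
    convert this using 1 <;> norm_num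
    all_goals rfl
  have hlu : HasDerivAt (fun x : ℝ => Real.log ((1 - x) / 2)) ((-(1/2)) / ((1 - m)/2)) m :=
    hu'.log hu.ne'
  have hlv : HasDerivAt (fun x : ℝ => Real.log ((1 + x) / 2)) ((1/2) / ((1 + m)/2)) m :=
    hv'.log hv.ne'
  have h := (((hu'.neg).mul hlu).sub (hv'.mul hlv))
  have : HasDerivAt binEntropy
      ((-(-(1/2))) * Real.log ((1 - m)/2) + (-((1 - m)/2)) * ((-(1/2)) / ((1 - m)/2))
        - ((1/2) * Real.log ((1 + m)/2) + ((1 + m)/2) * ((1/2) / ((1 + m)/2)))) m := by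
    exact h
  convert this using 1
  have ha : (1 - m) ≠ 0 := by linarith
  have hb : (1 + m) ≠ 0 := by linarith
  field_simp
  ring

lemma hasDerivAt_meanFieldFreeEnergy (β : ℝ) {m : ℝ} (h1 : -1 < m) (h2 : m < 1) :
    HasDerivAt (meanFieldFreeEnergy β)
      (-m - ((Real.log ((1 - m) / 2) - Real.log ((1 + m) / 2)) / 2) / β) m := by
  have h1' : HasDerivAt (fun x : ℝ => -x ^ 2 / 2) (-m) m := by
    have := ((hasDerivAt_pow 2 m).neg).div_const 2
    simpa using this.congr_deriv (by ring)
  exact (h1'.sub ((hasDerivAt_binEntropy h1 h2).div_const β))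

theorem meanFieldFreeEnergy_convex (β : ℝ) (hβ0 : 0 < β) (hβ1 : β ≤ 1) :
    ConvexOn ℝ (Set.Ioo (-1 : ℝ) 1) (meanFieldFreeEnergy β) := by
  set f' : ℝ → ℝ := fun m => -m - ((Real.log ((1 - m) / 2) - Real.log ((1 + m) / 2)) / 2) / β
  set f'' : ℝ → ℝ := fun m => -1 + 1 / (β * (1 - m ^ 2))
  apply convexOn_of_hasDerivWithinAt2_nonneg (f' := f') (f'' := f'') (convex_Ioo _ _)
  · intro m hm
    exact ((hasDerivAt_meanFieldFreeEnergy β hm.1 hm.2).continuousAt).continuousWithinAt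
  · intro m hm
    rw [interior_Ioo] at hm
    exact ((hasDerivAt_meanFieldFreeEnergy β hm.1 hm.2)).hasDerivWithinAt
  · intro m hm
    rw [interior_Ioo] at hm
    obtain ⟨h1, h2⟩ := hm
    have hu : (0:ℝ) < (1 - m) / 2 := by linarith
    have hv : (0:ℝ) < (1 + m) / 2 := by linarith
    have hu' : HasDerivAt (fun x : ℝ => (1 - x) / 2) (-(1/2)) m := by
      have := (((hasDerivAt_id m).const_sub 1).div_const 2)
      convert this using 1 <;> norm_num
      all_goals rfl
    have hv' : HasDerivAt (fun x : ℝ => (1 + x) / 2) (1/2) m := by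
      have := (((hasDerivAt_id m).const_add 1).div_const 2)
      convert this using 1 <;> norm_num
      all_goals rfl
    have hlu : HasDerivAt (fun x : ℝ => Real.log ((1 - x) / 2)) ((-(1/2)) / ((1 - m)/2)) m :=
      hu'.log hu.ne'
    have hlv : HasDerivAt (fun x : ℝ => Real.log ((1 + x) / 2)) ((1/2) / ((1 + m)/2)) m :=
      hv'.log hv.ne'
    have h : HasDerivAt f'
        (-1 - (((-(1/2)) / ((1 - m)/2) - (1/2) / ((1 + m)/2)) / 2) / β) m := by
      exact ((hasDerivAt_id m).neg.sub (((hlu.sub hlv).div_const 2).div_const β))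
    have heq : -1 - (((-(1/2)) / ((1 - m)/2) - (1/2) / ((1 + m)/2)) / 2) / β = f'' m := by
      have ha : (1 - m) ≠ 0 := by linarith
      have hb : (1 + m) ≠ 0 := by linarith
      have hc : (1 - m ^ 2) ≠ 0 := by nlinarith
      simp only [f'']
      field_simp
      ring
    rw [heq] at h
    exact h.hasDerivWithinAt
  · intro m hm
    rw [interior_Ioo] at hm
    obtain ⟨h1, h2⟩ := hm
    have hm2 : 0 < 1 - m ^ 2 := by nlinarith
    have hb : 0 < β * (1 - m ^ 2) := by positivity
    have hle : β * (1 - m ^ 2) ≤ 1 := by nlinarith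
    have : (1:ℝ) ≤ 1 / (β * (1 - m ^ 2)) := one_le_one_div hb hle
    simp only [f'']
    linarith
end
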